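/- arXiv:2407.10922 — 2 statements merged into one kernel-verified Lean document; each statement's English description precedes it below -/
import Mathlib

section
/- Let k ∈ ℤ and μ ∈ (−1/2, 1/2). Suppose v : ℝ → ℂ is differentiable, satisfies v′(s) = (k − (1/2)·tanh s)·v(s) for all s ∈ ℝ, is not identically zero, and ∫_ℝ |v(s)|²·(cosh s)^(−2μ) ds < ∞. Then k = 0. -/
open MeasureTheory

private lemma coshLeExpAbs (x : ℝ) : Real.cosh x ≤ Real.exp |x| := by
  rw [Real.cosh_eq]
  have h1 : Real.exp x ≤ Real.exp |x| := Real.exp_le_exp.2 (le_abs_self x)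
  have h2 : Real.exp (-x) ≤ Real.exp |x| := Real.exp_le_exp.2 (neg_le_abs x)
  linarith

private lemma notIntOfLB {c : ℝ} (hc : 0 < c) {F : ℝ → ℝ} (hF : Integrable F)
    {S : Set ℝ} (hSm : MeasurableSet S) (hS : volume S = ⊤)
    (hbd : ∀ s ∈ S, c ≤ F s) : False := by
  have h1 : IntegrableOn F S := hF.integrableOn
  have h2 : IntegrableOn (fun _ : ℝ => c) S := by
    refine h1.mono' aestronglyMeasurable_const ?_
    rw [ae_restrict_iff' hSm]
    filter_upwards with s hs
    rw [Real.norm_eq_abs, abs_of_pos hc]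
    exact hbd s hs
  rcases (integrableOn_const_iff).mp h2 with h | h
  · exact hc.ne' (enorm_eq_zero.mp h)
  · rw [hS] at h; exact (lt_irrefl _ h)

/-- Let `k ∈ ℤ` and `μ ∈ (−1/2, 1/2)`. If `v : ℝ → ℂ` is differentiable, satisfies
`v′(s) = (k − (1/2)·tanh s)·v(s)`, is not identically zero, and
`∫ |v(s)|²·(cosh s)^(−2μ) ds < ∞`, then `k = 0`. -/
theorem stmt3 (k : ℤ) (μ : ℝ) (hμ : μ ∈ Set.Ioo (-(1/2) : ℝ) (1/2))
    (v : ℝ → ℂ) (hv : Differentiable ℝ v)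
    (hode : ∀ s : ℝ, deriv v s = (((k : ℝ) - Real.tanh s / 2 : ℝ) : ℂ) * v s)
    (hne : v ≠ 0)
    (hint : Integrable (fun s : ℝ => ‖v s‖ ^ 2 * Real.cosh s ^ (-(2 * μ)))) :
    k = 0 := by
  obtain ⟨hμ1, hμ2⟩ := hμ
  set g : ℝ → ℝ := fun s => Real.exp (-((k:ℝ) * s)) * Real.sqrt (Real.cosh s) with hgdef
  have hgpos : ∀ s, 0 < g s := fun s =>
    mul_pos (Real.exp_pos _) (Real.sqrt_pos.2 (Real.cosh_pos s))
  have hgd : ∀ s, HasDerivAt g (g s * (-(k:ℝ) + Real.tanh s / 2)) s := by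
    intro s
    have hc : (0:ℝ) < Real.cosh s := Real.cosh_pos s
    have h1 : HasDerivAt (fun s : ℝ => Real.exp (-((k:ℝ) * s)))
        (Real.exp (-((k:ℝ)*s)) * (-(k:ℝ))) s := by
      have hi : HasDerivAt (fun s : ℝ => -((k:ℝ) * s)) (-(k:ℝ)) s := by
        simpa using (hasDerivAt_id s).const_mul (-(k:ℝ))
      exact hi.exp
    have h2 : HasDerivAt (fun s : ℝ => Real.sqrt (Real.cosh s))
        (Real.sinh s / (2 * Real.sqrt (Real.cosh s))) s :=
      (Real.hasDerivAt_cosh s).sqrt hc.ne'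
    have := h1.fun_mul h2
    refine this.congr_deriv (Eq.symm ?_)
    have hs : Real.sqrt (Real.cosh s) ^ 2 = Real.cosh s := Real.sq_sqrt hc.le
    have hsne : Real.sqrt (Real.cosh s) ≠ 0 := (Real.sqrt_pos.2 hc).ne'
    rw [Real.tanh_eq_sinh_div_cosh]
    field_simp
    linear_combination (Real.exp (-((k:ℝ) * s)) * Real.sinh s) * hs
  -- w = g * v is constant
  set w : ℝ → ℂ := fun s => (g s : ℂ) * v s with hwdef
  have hwd : ∀ s, HasDerivAt w 0 s := by
    intro s
    have h1 : HasDerivAt (fun s : ℝ => ((g s : ℝ) : ℂ))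
        (((g s * (-(k:ℝ) + Real.tanh s / 2) : ℝ)) : ℂ) s := (hgd s).ofReal_comp
    have h2 : HasDerivAt v (deriv v s) s := (hv s).hasDerivAt
    rw [hode s] at h2
    have := h1.fun_mul h2
    refine this.congr_deriv (Eq.symm ?_)
    push_cast
    ring
  have hwconst : ∀ s, w s = w 0 := by
    intro s
    exact is_const_of_deriv_eq_zero (fun t => (hwd t).differentiableAt)
      (fun t => (hwd t).deriv) s 0
  have hw0 : w 0 = v 0 := by
    simp [hwdef, hgdef]
  have hkey : ∀ s, (g s : ℂ) * v s = v 0 := fun s => (hwconst s).trans hw0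
  -- v 0 ≠ 0
  have hv0 : v 0 ≠ 0 := by
    intro h0
    apply hne
    funext s
    have hks := hkey s
    rw [h0] at hks
    have hgne : (g s : ℂ) ≠ 0 := by exact_mod_cast (hgpos s).ne'
    have := mul_eq_zero.mp hks
    tauto
  -- formula for |v s|^2
  set c : ℝ := ‖v 0‖ ^ 2 with hcdef
  have hc : 0 < c := pow_pos (norm_pos_iff.mpr hv0) 2
  have habs : ∀ s, ‖v s‖ ^ 2
      = c * (Real.exp (2*(k:ℝ)*s) / Real.cosh s) := by
    intro s
    have h := congrArg norm (hkey s)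
    rw [norm_mul, Complex.norm_real, Real.norm_eq_abs, abs_of_pos (hgpos s)] at h
    have hgne : g s ≠ 0 := (hgpos s).ne'
    have hvs : ‖v s‖ = ‖v 0‖ / g s := by
      field_simp at h ⊢; linarith [h]
    rw [hvs, div_pow, hcdef]
    have hg2 : g s ^ 2 = Real.exp (-(2*(k:ℝ)*s)) * Real.cosh s := by
      rw [hgdef]
      have : Real.sqrt (Real.cosh s) ^ 2 = Real.cosh s := Real.sq_sqrt (Real.cosh_pos s).le
      rw [mul_pow, this, ← Real.exp_nat_mul]
      ring_nf
    rw [hg2, Real.exp_neg]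
    field_simp
  have hμ2' : (-1:ℝ) ≤ -(2*μ) := by linarith
  -- k ≥ 1 impossible
  have hknotpos : ¬ (1 ≤ k) := by
    intro hk
    refine notIntOfLB hc hint (measurableSet_Ici (a := (0:ℝ))) Real.volume_Ici ?_
    intro s hs
    have hs0 : (0:ℝ) ≤ s := hs
    have hcpos := Real.cosh_pos s
    have e1 : Real.exp (-s) ≤ (Real.cosh s)⁻¹ := by
      have hce : Real.cosh s ≤ Real.exp s := by
        have := coshLeExpAbs s; rwa [abs_of_nonneg hs0] at this
      rw [Real.exp_neg]
      exact inv_anti₀ hcpos hce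
    have e2 : Real.exp (-s) ≤ Real.cosh s ^ (-(2*μ)) := by
      refine e1.trans ?_
      rw [← Real.rpow_neg_one]
      exact Real.rpow_le_rpow_of_exponent_le (Real.one_le_cosh s) hμ2'
    have e3 : (1:ℝ) ≤ Real.exp (2*(k:ℝ)*s) * Real.exp (-s) * Real.exp (-s) := by
      rw [← Real.exp_add, ← Real.exp_add]
      have hk1 : (1:ℝ) ≤ (k:ℝ) := by exact_mod_cast hk
      have : (0:ℝ) ≤ 2*(k:ℝ)*s + -s + -s := by nlinarith
      calc (1:ℝ) = Real.exp 0 := Real.exp_zero.symm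
        _ ≤ _ := Real.exp_le_exp.2 this
    rw [habs s]
    have hE := Real.exp_pos (2*(k:ℝ)*s)
    have hE2 := Real.exp_pos (-s)
    have hrp : (0:ℝ) ≤ Real.cosh s ^ (-(2*μ)) := Real.rpow_nonneg hcpos.le _
    calc c ≤ c * (Real.exp (2*(k:ℝ)*s) * Real.exp (-s) * Real.exp (-s)) :=
          le_mul_of_one_le_right hc.le e3
      _ = c * (Real.exp (2*(k:ℝ)*s) * Real.exp (-s)) * Real.exp (-s) := by ring
      _ ≤ c * (Real.exp (2*(k:ℝ)*s) * Real.exp (-s)) * Real.cosh s ^ (-(2*μ)) :=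
          mul_le_mul_of_nonneg_left e2 (by positivity)
      _ ≤ c * (Real.exp (2*(k:ℝ)*s) / Real.cosh s) * Real.cosh s ^ (-(2*μ)) := by
          have h4 : Real.exp (2*(k:ℝ)*s) * Real.exp (-s) ≤ Real.exp (2*(k:ℝ)*s) / Real.cosh s := by
            rw [div_eq_mul_inv]
            exact mul_le_mul_of_nonneg_left e1 hE.le
          exact mul_le_mul_of_nonneg_right (mul_le_mul_of_nonneg_left h4 hc.le) hrp
  -- k ≤ -1 impossible
  have hknotneg : ¬ (k ≤ -1) := by
    intro hk
    refine notIntOfLB hc hint (measurableSet_Iic (a := (0:ℝ))) Real.volume_Iic ?_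
    intro s hs
    have hs0 : s ≤ (0:ℝ) := hs
    have hcpos := Real.cosh_pos s
    have e1 : Real.exp s ≤ (Real.cosh s)⁻¹ := by
      have hce : Real.cosh s ≤ Real.exp (-s) := by
        have := coshLeExpAbs s; rwa [abs_of_nonpos hs0] at this
      rw [show Real.exp s = (Real.exp (-s))⁻¹ by rw [Real.exp_neg, inv_inv]]
      exact inv_anti₀ hcpos hce
    have e2 : Real.exp s ≤ Real.cosh s ^ (-(2*μ)) := by
      refine e1.trans ?_
      rw [← Real.rpow_neg_one]
      exact Real.rpow_le_rpow_of_exponent_le (Real.one_le_cosh s) hμ2'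
    have e3 : (1:ℝ) ≤ Real.exp (2*(k:ℝ)*s) * Real.exp s * Real.exp s := by
      rw [← Real.exp_add, ← Real.exp_add]
      have hk1 : (k:ℝ) ≤ -1 := by exact_mod_cast hk
      have : (0:ℝ) ≤ 2*(k:ℝ)*s + s + s := by nlinarith
      calc (1:ℝ) = Real.exp 0 := Real.exp_zero.symm
        _ ≤ _ := Real.exp_le_exp.2 this
    rw [habs s]
    have hE := Real.exp_pos (2*(k:ℝ)*s)
    have hE2 := Real.exp_pos s
    have hrp : (0:ℝ) ≤ Real.cosh s ^ (-(2*μ)) := Real.rpow_nonneg hcpos.le _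
    calc c ≤ c * (Real.exp (2*(k:ℝ)*s) * Real.exp s * Real.exp s) :=
          le_mul_of_one_le_right hc.le e3
      _ = c * (Real.exp (2*(k:ℝ)*s) * Real.exp s) * Real.exp s := by ring
      _ ≤ c * (Real.exp (2*(k:ℝ)*s) * Real.exp s) * Real.cosh s ^ (-(2*μ)) :=
          mul_le_mul_of_nonneg_left e2 (by positivity)
      _ ≤ c * (Real.exp (2*(k:ℝ)*s) / Real.cosh s) * Real.cosh s ^ (-(2*μ)) := by
          have h4 : Real.exp (2*(k:ℝ)*s) * Real.exp s ≤ Real.exp (2*(k:ℝ)*s) / Real.cosh s := by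
            rw [div_eq_mul_inv]
            exact mul_le_mul_of_nonneg_left e1 hE.le
          exact mul_le_mul_of_nonneg_right (mul_le_mul_of_nonneg_left h4 hc.le) hrp
  omega
end

section
/- Let a₀, a_t, a_x, a_y : ℝ³ → ℝ be differentiable functions of the coordinates (t, x, y). Define b₀ = ∂_t a_t + ∂_x a_x + ∂_y a_y, b_t = −∂_t a₀ + ∂_x a_y − ∂_y a_x, b_x = −∂_x a₀ + ∂_y a_t − ∂_t a_y, and b_y = −∂_y a₀ + ∂_t a_x − ∂_x a_t. Define ψ₁ := −a_y + i·a_x and ψ₂ := −a_t − i·a₀ (functions ℝ³ → ℂ). Then pointwise on ℝ³: −b_y + i·b_x = i·∂_t ψ₁ − (∂_x + i·∂_y)(conj ψ₂) and −b_t − i·b₀ = i·∂_t ψ₂ + (∂_x + i·∂_y)(conj ψ₁). -/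
/-- Partial derivative in the `t`-direction of a function of `(t, x, y) ∈ ℝ³`. -/
noncomputable def pdT {E : Type*} [NormedAddCommGroup E] [NormedSpace ℝ E]
    (f : ℝ × ℝ × ℝ → E) (p : ℝ × ℝ × ℝ) : E :=
  fderiv ℝ f p (1, 0, 0)

/-- Partial derivative in the `x`-direction of a function of `(t, x, y) ∈ ℝ³`. -/
noncomputable def pdX {E : Type*} [NormedAddCommGroup E] [NormedSpace ℝ E]
    (f : ℝ × ℝ × ℝ → E) (p : ℝ × ℝ × ℝ) : E :=
  fderiv ℝ f p (0, 1, 0)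

/-- Partial derivative in the `y`-direction of a function of `(t, x, y) ∈ ℝ³`. -/
noncomputable def pdY {E : Type*} [NormedAddCommGroup E] [NormedSpace ℝ E]
    (f : ℝ × ℝ × ℝ → E) (p : ℝ × ℝ × ℝ) : E :=
  fderiv ℝ f p (0, 0, 1)

private lemma fd_combo (f g : ℝ × ℝ × ℝ → ℝ) (hf : Differentiable ℝ f)
    (hg : Differentiable ℝ g) (p v : ℝ × ℝ × ℝ) :
    fderiv ℝ (fun q => (f q : ℂ) + Complex.I * (g q : ℂ)) p v
      = (fderiv ℝ f p v : ℂ) + Complex.I * (fderiv ℝ g p v : ℂ) := by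
  have hF : HasFDerivAt (fun q => (f q : ℂ))
      (Complex.ofRealCLM.comp (fderiv ℝ f p)) p :=
    Complex.ofRealCLM.hasFDerivAt.comp p (hf p).hasFDerivAt
  have hG : HasFDerivAt (fun q => (g q : ℂ))
      (Complex.ofRealCLM.comp (fderiv ℝ g p)) p :=
    Complex.ofRealCLM.hasFDerivAt.comp p (hg p).hasFDerivAt
  have h : HasFDerivAt (fun q => (f q : ℂ) + Complex.I * (g q : ℂ)) _ p :=
    hF.add (hG.const_mul Complex.I)
  rw [h.fderiv]
  simp [mul_comm]

/-- The flat-space coordinate form of the intertwining between the Hodge–de Rham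
operator on `Ω⁰ ⊕ Ω¹` over `ℝ³` and a Dirac-type operator: with
`b₀ = ∂ₜaₜ + ∂ₓaₓ + ∂ᵧaᵧ`, `bₜ = −∂ₜa₀ + ∂ₓaᵧ − ∂ᵧaₓ`, `bₓ = −∂ₓa₀ + ∂ᵧaₜ − ∂ₜaᵧ`,
`bᵧ = −∂ᵧa₀ + ∂ₜaₓ − ∂ₓaₜ`, `ψ₁ = −aᵧ + i·aₓ`, `ψ₂ = −aₜ − i·a₀`, one has
`−bᵧ + i·bₓ = i·∂ₜψ₁ − (∂ₓ + i∂ᵧ)(conj ψ₂)` and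
`−bₜ − i·b₀ = i·∂ₜψ₂ + (∂ₓ + i∂ᵧ)(conj ψ₁)` pointwise. -/
theorem stmt10 (a₀ aT aX aY : ℝ × ℝ × ℝ → ℝ)
    (h₀ : Differentiable ℝ a₀) (hT : Differentiable ℝ aT)
    (hX : Differentiable ℝ aX) (hY : Differentiable ℝ aY)
    (b₀ bT bX bY : ℝ × ℝ × ℝ → ℝ) (ψ₁ ψ₂ : ℝ × ℝ × ℝ → ℂ)
    (hb₀ : b₀ = fun p => pdT aT p + pdX aX p + pdY aY p)
    (hbT : bT = fun p => -pdT a₀ p + pdX aY p - pdY aX p)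
    (hbX : bX = fun p => -pdX a₀ p + pdY aT p - pdT aY p)
    (hbY : bY = fun p => -pdY a₀ p + pdT aX p - pdX aT p)
    (hψ₁ : ψ₁ = fun p => (-(aY p) : ℂ) + Complex.I * (aX p : ℂ))
    (hψ₂ : ψ₂ = fun p => (-(aT p) : ℂ) - Complex.I * (a₀ p : ℂ)) :
    ∀ p : ℝ × ℝ × ℝ,
      (((-(bY p) : ℝ) : ℂ) + Complex.I * (bX p : ℂ)
          = Complex.I * pdT ψ₁ p -
              (pdX (fun q => (starRingEnd ℂ) (ψ₂ q)) p +
                Complex.I * pdY (fun q => (starRingEnd ℂ) (ψ₂ q)) p)) ∧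
      (((-(bT p) : ℝ) : ℂ) - Complex.I * (b₀ p : ℂ)
          = Complex.I * pdT ψ₂ p +
              (pdX (fun q => (starRingEnd ℂ) (ψ₁ q)) p +
                Complex.I * pdY (fun q => (starRingEnd ℂ) (ψ₁ q)) p)) := by
  intro p
  have hc₂ : (fun q => (starRingEnd ℂ) (ψ₂ q))
      = fun q => ((-(aT q) : ℝ) : ℂ) + Complex.I * ((a₀ q : ℝ) : ℂ) := by
    funext q
    simp [hψ₂, Complex.ext_iff]
  have hc₁ : (fun q => (starRingEnd ℂ) (ψ₁ q))
      = fun q => ((-(aY q) : ℝ) : ℂ) + Complex.I * ((-(aX q) : ℝ) : ℂ) := by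
    funext q
    simp [hψ₁, Complex.ext_iff]
  have hψ₁' : ψ₁ = fun q => ((-(aY q) : ℝ) : ℂ) + Complex.I * ((aX q : ℝ) : ℂ) := by
    funext q; simp [hψ₁]
  have hψ₂' : ψ₂ = fun q => ((-(aT q) : ℝ) : ℂ) + Complex.I * ((-(a₀ q) : ℝ) : ℂ) := by
    funext q; simp [hψ₂, Complex.ext_iff]
  have key : ∀ (f g : ℝ × ℝ × ℝ → ℝ), Differentiable ℝ f → Differentiable ℝ g →
      ∀ v, fderiv ℝ (fun q => ((f q : ℝ) : ℂ) + Complex.I * ((g q : ℝ) : ℂ)) p v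
        = (fderiv ℝ f p v : ℂ) + Complex.I * (fderiv ℝ g p v : ℂ) :=
    fun f g hf hg v => fd_combo f g hf hg p v
  simp only [pdT, pdX, pdY]
  rw [hc₁, hc₂]
  simp only [hψ₁', hψ₂', hb₀, hbT, hbX, hbY]
  simp only [key (fun q => -aY q) _ hY.neg hX, key (fun q => -aT q) _ hT.neg h₀,
    key (fun q => -aY q) (fun q => -aX q) hY.neg hX.neg,
    key (fun q => -aT q) (fun q => -a₀ q) hT.neg h₀.neg, fderiv_fun_neg]
  refine ⟨?_, ?_⟩ <;>
    · simp only [pdT, pdX, pdY, Complex.ext_iff, fderiv_fun_neg, ContinuousLinearMap.neg_apply,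
        Complex.add_re, Complex.add_im, Complex.sub_re, Complex.sub_im,
        Complex.mul_re, Complex.mul_im, Complex.I_re, Complex.I_im,
        Complex.ofReal_re, Complex.ofReal_im, Complex.neg_re, Complex.neg_im]
      constructor <;> ring
end
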